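/- Let ν ≡ 4 (mod 6) be a positive integer. Then there exists a partial triple system PTS(ν,1) with exactly (C(ν,2) − ν/2 − 1)/3 triples whose leave is K_{1,3} together with (ν−4)/2 independent edges: there are four vertices w,x,y,z and a partition of the remaining ν−4 vertices into (ν−4)/2 pairs such that the pairs {w,x}, {w,y}, {w,z} and the (ν−4)/2 partition pairs are each contained in no triple, while every other pair of vertices is contained in exactly one triple. -/

import Mathlib

/-- The function `g(ν, λ, s)` from the paper. -/
noncomputable def gfun (ν lam s : ℕ) : ℤ :=
  if ν ≤ 2 then 0
  else if (ν % 6 = 0 ∧ lam % 2 = 1) ∨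
          (ν % 6 = 2 ∧ (lam % 6 = 1 ∨ lam % 6 = 3)) ∨
          (ν % 6 = 2 ∧ lam % 6 = 5 ∧ s < ν / 2) ∨
          (ν % 6 = 4 ∧ lam % 2 = 1 ∧ s < ν / 2) then
    ⌊(lam : ℚ) / 3 * (ν.choose 2 : ℚ) - (ν : ℚ) / 6⌋
  else if (ν % 6 = 2 ∧ lam % 6 = 5 ∧ s = ν / 2) ∨
          (ν % 6 = 4 ∧ lam % 2 = 1 ∧ s = ν / 2) then
    ⌊(lam : ℚ) / 3 * (ν.choose 2 : ℚ) - (ν : ℚ) / 6⌋ - 1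
  else if (ν % 6 = 2 ∧ lam % 6 = 4 ∧ s = 0) ∨
          (ν % 6 = 5 ∧ lam % 3 = 1 ∧ s = 0) then
    ⌊(lam : ℚ) / 3 * (ν.choose 2 : ℚ)⌋ - 1
  else ⌊(lam : ℚ) / 3 * (ν.choose 2 : ℚ) - 2 * (s : ℚ) / 3⌋

/-- The function `f(n, ν, Δ₂)` from the paper. -/
noncomputable def ffun (n ν Δ : ℕ) : ℤ :=
  ⌊(ν : ℚ) * ((n : ℚ) - (ν : ℚ)) * (Δ : ℚ) / 2⌋ +
  if Even ((n - ν) * Δ) ∨ Even ν then gfun ν Δ 0 else gfun ν Δ (ν / 2)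

/-- The codegree of a pair `p` of vertices in a 3-multigraph `H`: the number of
triples of `H` (with multiplicity) containing `p`. -/
def codegPair {V : Type*} [DecidableEq V] (H : Multiset (Finset V)) (p : Finset V) : ℕ :=
  Multiset.card (H.filter fun t => p ⊆ t)

namespace S8
open Finset

abbrev V (m : ℕ) := Option (ZMod m × ZMod 3)

variable (m : ℕ)

def kk : ZMod m := ((m+1)/2 : ℕ)

def Rep (d : ZMod m) : Prop := d ≠ 0 ∧ 2 * d.val < m

instance : DecidablePred (Rep m) := fun _ => instDecidableAnd

def tripA (c d : ZMod m) (i : ZMod 3) : Finset (V m) :=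
  {some (c+d, i), some (c-d, i), some (-c, i+1)}

def tripC (d : ZMod m) (i : ZMod 3) : Finset (V m) :=
  {none, some (d, i), some (-d, i+1)}

def tripB : Finset (V m) := {some (0,0), some (0,1), some (0,2)}

def pairP (d : ZMod m) (i : ZMod 3) : Finset (V m) := {some (-d, i), some (d, i+1)}

section
variable [NeZero m]

def RS : Finset (ZMod m) := univ.filter (Rep m)

def idxA : Finset (ZMod m × ZMod m × ZMod 3) := univ ×ˢ (RS m ×ˢ univ)

def idxC : Finset (ZMod m × ZMod 3) := RS m ×ˢ univ

def HH : Multiset (Finset (V m)) :=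
  (idxA m).val.map (fun t => tripA m t.1 t.2.1 t.2.2) +
  (idxC m).val.map (fun t => tripC m t.1 t.2) + {tripB m}

def PP : Finset (Finset (V m)) := (idxC m).image (fun t => pairP m t.1 t.2)

variable {m}
set_option linter.unusedSectionVars false

/-! ### arithmetic helpers -/

lemma hk (hm : m % 2 = 1) : (2 : ZMod m) * kk m = 1 := by
  have h2 : 2 * ((m+1)/2) = m + 1 := by omega
  have : ((2 * ((m+1)/2) : ℕ) : ZMod m) = ((m + 1 : ℕ) : ZMod m) := by rw [h2]
  push_cast at this
  simpa [kk, ZMod.natCast_self] using this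

lemma mul2_inj (hm : m % 2 = 1) {x y : ZMod m} (h : (2:ZMod m)*x = 2*y) : x = y := by
  have := congrArg (fun z => kk m * z) h
  simp only [← mul_assoc, mul_comm (kk m) 2, hk hm, one_mul] at this
  exact this

lemma two_kk_mul (hm : m % 2 = 1) (z : ZMod m) : (2:ZMod m) * (kk m * z) = z := by
  rw [← mul_assoc, hk hm, one_mul]

lemma two_mul_ne_zero (hm : m % 2 = 1) {d : ZMod m} (hd : d ≠ 0) : (2:ZMod m)*d ≠ 0 := by
  intro h
  exact hd (mul2_inj hm (by simpa using h))

lemma rep_total (hm : m % 2 = 1) {d : ZMod m} (hd : d ≠ 0) : Rep m d ∨ Rep m (-d) := by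
  have hdv : d.val ≠ 0 := fun h => hd (ZMod.val_injective m (by simp [h, ZMod.val_zero]))
  have hneg : (-d).val = m - d.val := by simp [ZMod.neg_val, hd]
  have hlt : d.val < m := ZMod.val_lt d
  have hnd : -d ≠ 0 := by simpa using (neg_ne_zero.mpr hd)
  rcases Nat.lt_or_ge (2 * d.val) m with h | h
  · exact Or.inl ⟨hd, h⟩
  · exact Or.inr ⟨hnd, by omega⟩

lemma rep_not_both (hm : m % 2 = 1) {d : ZMod m} (h1 : Rep m d) (h2 : Rep m (-d)) : False := by
  obtain ⟨hd, hv⟩ := h1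
  obtain ⟨_, hv2⟩ := h2
  have hdv : d.val ≠ 0 := fun h => hd (ZMod.val_injective m (by simp [h, ZMod.val_zero]))
  have hneg : (-d).val = m - d.val := by simp [ZMod.neg_val, hd]
  have hlt : d.val < m := ZMod.val_lt d
  omega

lemma rep_ne_zero {d : ZMod m} (h : Rep m d) : d ≠ 0 := h.1

/-! ### membership helpers -/

lemma mem_tripA (x : ZMod m) (i : ZMod 3) (c d : ZMod m) (j : ZMod 3) :
    some (x, i) ∈ tripA m c d j ↔
      (x = c+d ∧ i = j) ∨ (x = c-d ∧ i = j) ∨ (x = -c ∧ i = j+1) := by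
  simp [tripA, Prod.ext_iff]

lemma none_not_mem_tripA (c d : ZMod m) (j : ZMod 3) : (none : V m) ∉ tripA m c d j := by
  simp [tripA]

lemma mem_tripC (x : ZMod m) (i : ZMod 3) (d : ZMod m) (j : ZMod 3) :
    some (x, i) ∈ tripC m d j ↔ (x = d ∧ i = j) ∨ (x = -d ∧ i = j+1) := by
  simp [tripC, Prod.ext_iff]

lemma none_mem_tripC (d : ZMod m) (j : ZMod 3) : (none : V m) ∈ tripC m d j := by
  simp [tripC]

lemma mem_tripB (x : ZMod m) (i : ZMod 3) : some (x, i) ∈ tripB m ↔ x = 0 := by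
  have h3 : i = 0 ∨ i = 1 ∨ i = 2 := by revert i; decide
  rcases h3 with h | h | h <;> subst h <;> simp [tripB, Prod.ext_iff] <;> tauto

lemma none_not_mem_tripB : (none : V m) ∉ tripB m := by simp [tripB]

lemma mem_idxA {t : ZMod m × ZMod m × ZMod 3} : t ∈ idxA m ↔ Rep m t.2.1 := by
  simp [idxA, RS, Finset.mem_product]

lemma mem_idxC {t : ZMod m × ZMod 3} : t ∈ idxC m ↔ Rep m t.1 := by
  simp [idxC, RS, Finset.mem_product]

lemma pair_subset_iff {α : Type*} [DecidableEq α] (u v : α) (t : Finset α) :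
    ({u, v} : Finset α) ⊆ t ↔ u ∈ t ∧ v ∈ t := by
  simp [insert_subset_iff]

lemma filter_card_one {α : Type*} {s : Finset α} {Q : α → Prop} [DecidablePred Q] {a : α}
    (ha : a ∈ s) (hQa : Q a) (h : ∀ b ∈ s, Q b → b = a) : (s.filter Q).card = 1 := by
  have : s.filter Q = {a} := by
    ext b
    simp only [mem_filter, mem_singleton]
    constructor
    · rintro ⟨hb, hQb⟩; exact h b hb hQb
    · rintro rfl; exact ⟨ha, hQa⟩
  rw [this, card_singleton]

lemma filter_card_zero {α : Type*} {s : Finset α} {Q : α → Prop} [DecidablePred Q]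
    (h : ∀ b ∈ s, ¬ Q b) : (s.filter Q).card = 0 := by
  rw [filter_false_of_mem h]; rfl

/-! ### level facts -/

lemma z3_ne_succ (i : ZMod 3) : i ≠ i + 1 := by revert i; decide
lemma z3_succ_ne (i : ZMod 3) : i + 1 ≠ i := by revert i; decide
lemma z3_tri (i j : ZMod 3) : j = i ∨ j = i + 1 ∨ i = j + 1 := by revert i j; decide
lemma z3_no_ab (i j : ZMod 3) : ¬ (i = j + 1 ∧ i + 1 = j) := by revert i j; decide
lemma z3_add_sub (i : ZMod 3) : (i + 2) + 1 = i := by revert i; decide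
lemma z3cases (i : ZMod 3) : i = 0 ∨ i = 1 ∨ i = 2 := by revert i; decide

/-! ### codegree splitting -/

lemma codeg_split (p : Finset (V m)) :
    codegPair (HH m) p =
      ((idxA m).filter (fun t => p ⊆ tripA m t.1 t.2.1 t.2.2)).card +
      ((idxC m).filter (fun t => p ⊆ tripC m t.1 t.2)).card +
      (if p ⊆ tripB m then 1 else 0) := by
  unfold codegPair HH
  rw [Multiset.filter_add, Multiset.filter_add, Multiset.card_add, Multiset.card_add,
      Multiset.filter_map, Multiset.filter_map, Multiset.card_map, Multiset.card_map]
  rw [Multiset.filter_singleton, Finset.card_def, Finset.card_def,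
      Finset.filter_val, Finset.filter_val]
  congr 1
  split_ifs <;> simp

/-! ### the three codegree computations -/

lemma z3_shift (i j : ZMod 3) (h : i = j + 1) : j = i + 2 := by revert i j; decide

lemma codeg_inf (hm : m % 2 = 1) (x : ZMod m) (i : ZMod 3) :
    codegPair (HH m) {(none : V m), some (x, i)} = if x = 0 then 0 else 1 := by
  rw [codeg_split]
  have hA : ((idxA m).filter
      (fun t => ({(none : V m), some (x, i)} : Finset (V m)) ⊆ tripA m t.1 t.2.1 t.2.2)).card = 0 := by
    apply filter_card_zero
    intro b _ hQ
    rw [pair_subset_iff] at hQ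
    exact none_not_mem_tripA _ _ _ hQ.1
  have hB : (if ({(none : V m), some (x, i)} : Finset (V m)) ⊆ tripB m then 1 else 0) = 0 := by
    rw [if_neg]
    rw [pair_subset_iff]
    rintro ⟨h1, -⟩
    exact none_not_mem_tripB h1
  rw [hA, hB]
  by_cases hx : x = 0
  · rw [if_pos hx]
    subst hx
    have hC : ((idxC m).filter
        (fun t => ({(none : V m), some ((0:ZMod m), i)} : Finset (V m)) ⊆ tripC m t.1 t.2)).card = 0 := by
      apply filter_card_zero
      rintro ⟨d, j⟩ hb hQ
      rw [pair_subset_iff] at hQ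
      rw [mem_tripC] at hQ
      have hd : Rep m d := mem_idxC.mp hb
      rcases hQ.2 with ⟨h1, -⟩ | ⟨h1, -⟩
      · exact hd.1 h1.symm
      · exact hd.1 (by rw [← neg_eq_zero]; exact h1.symm)
    rw [hC]
  · rw [if_neg hx]
    rcases rep_total hm hx with hrep | hrep
    · have hC : ((idxC m).filter
          (fun t => ({(none : V m), some (x, i)} : Finset (V m)) ⊆ tripC m t.1 t.2)).card = 1 := by
        apply filter_card_one (a := (x, i))
        · exact mem_idxC.mpr hrep
        · rw [pair_subset_iff]
          refine ⟨none_mem_tripC _ _, ?_⟩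
          rw [mem_tripC]
          exact Or.inl ⟨rfl, rfl⟩
        · rintro ⟨d, j⟩ hb hQ
          have hd : Rep m d := mem_idxC.mp hb
          rw [pair_subset_iff] at hQ
          rw [mem_tripC] at hQ
          rcases hQ.2 with ⟨h1, h2⟩ | ⟨h1, h2⟩
          · rw [Prod.mk.injEq]; exact ⟨h1.symm, h2.symm⟩
          · exfalso
            have : d = -x := by rw [h1]; ring
            rw [this] at hd
            exact rep_not_both hm hrep hd
      rw [hC]
    · have hC : ((idxC m).filter
          (fun t => ({(none : V m), some (x, i)} : Finset (V m)) ⊆ tripC m t.1 t.2)).card = 1 := by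
        apply filter_card_one (a := (-x, i + 2))
        · exact mem_idxC.mpr hrep
        · rw [pair_subset_iff]
          refine ⟨none_mem_tripC _ _, ?_⟩
          rw [mem_tripC]
          refine Or.inr ⟨by ring, (z3_add_sub i).symm⟩
        · rintro ⟨d, j⟩ hb hQ
          have hd : Rep m d := mem_idxC.mp hb
          rw [pair_subset_iff] at hQ
          rw [mem_tripC] at hQ
          rcases hQ.2 with ⟨h1, h2⟩ | ⟨h1, h2⟩
          · exfalso
            have h1' : x = d := h1
            rw [← h1'] at hd
            exact rep_not_both hm hd hrep
          · have hdx : d = -x := by rw [h1]; ring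
            have hj : j = i + 2 := z3_shift i j h2
            rw [Prod.mk.injEq]; exact ⟨hdx, hj⟩
      rw [hC]

lemma codeg_same (hm : m % 2 = 1) (x y : ZMod m) (i : ZMod 3) (hxy : x ≠ y) :
    codegPair (HH m) {(some (x,i) : V m), some (y,i)} = 1 := by
  rw [codeg_split]
  have hC : ((idxC m).filter
      (fun t => ({(some (x,i) : V m), some (y,i)} : Finset (V m)) ⊆ tripC m t.1 t.2)).card = 0 := by
    apply filter_card_zero
    rintro ⟨d, j⟩ _ hQ
    rw [pair_subset_iff, mem_tripC, mem_tripC] at hQ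
    obtain ⟨hx, hy⟩ := hQ
    rcases hx with ⟨hx1, hx2⟩ | ⟨hx1, hx2⟩ <;> rcases hy with ⟨hy1, hy2⟩ | ⟨hy1, hy2⟩
    · exact hxy (hx1.trans hy1.symm)
    · exact absurd (hx2.symm.trans hy2).symm (z3_succ_ne _)
    · exact absurd (hy2.symm.trans hx2).symm (z3_succ_ne _)
    · exact hxy (hx1.trans hy1.symm)
  have hB : (if ({(some (x,i) : V m), some (y,i)} : Finset (V m)) ⊆ tripB m then 1 else 0) = 0 := by
    rw [if_neg]
    rw [pair_subset_iff, mem_tripB, mem_tripB]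
    rintro ⟨h1, h2⟩
    exact hxy (h1.trans h2.symm)
  have h2c0 : (2:ZMod m) * (kk m * (x + y)) = x + y := two_kk_mul hm _
  have h2d1 : (2:ZMod m) * (kk m * (x - y)) = x - y := two_kk_mul hm _
  set c0 : ZMod m := kk m * (x + y) with hc0def
  set d1 : ZMod m := kk m * (x - y) with hd1def
  have hd1ne : d1 ≠ 0 := by
    intro h
    rw [h, mul_zero] at h2d1
    exact hxy (sub_eq_zero.mp h2d1.symm)
  have key : ∀ c d : ZMod m, ∀ j : ZMod 3, Rep m d →
      (({(some (x,i) : V m), some (y,i)} : Finset (V m)) ⊆ tripA m c d j) →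
      c = c0 ∧ j = i ∧ ((d = d1 ∧ c + d = x ∧ c - d = y) ∨ (d = -d1 ∧ c + d = y ∧ c - d = x)) := by
    intro c d j hd hQ
    rw [pair_subset_iff, mem_tripA, mem_tripA] at hQ
    obtain ⟨hx, hy⟩ := hQ
    have hbase : i = j ∧ ((x = c + d ∧ y = c - d) ∨ (x = c - d ∧ y = c + d)) := by
      rcases hx with ⟨hx1, hx2⟩ | ⟨hx1, hx2⟩ | ⟨hx1, hx2⟩ <;>
        rcases hy with ⟨hy1, hy2⟩ | ⟨hy1, hy2⟩ | ⟨hy1, hy2⟩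
      · exact absurd (hx1.trans hy1.symm) hxy
      · exact ⟨hx2, Or.inl ⟨hx1, hy1⟩⟩
      · exact absurd (hx2.symm.trans hy2).symm (z3_succ_ne _)
      · exact ⟨hx2, Or.inr ⟨hx1, hy1⟩⟩
      · exact absurd (hx1.trans hy1.symm) hxy
      · exact absurd (hx2.symm.trans hy2).symm (z3_succ_ne _)
      · exact absurd (hy2.symm.trans hx2).symm (z3_succ_ne _)
      · exact absurd (hy2.symm.trans hx2).symm (z3_succ_ne _)
      · exact absurd (hx1.trans hy1.symm) hxy
    obtain ⟨hij, hbase⟩ := hbase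
    have hcc : c = c0 := by
      apply mul2_inj hm
      rw [h2c0]
      rcases hbase with ⟨h1, h2⟩ | ⟨h1, h2⟩ <;> rw [h1, h2] <;> ring
    refine ⟨hcc, hij.symm, ?_⟩
    rcases hbase with ⟨h1, h2⟩ | ⟨h1, h2⟩
    · left
      have hdd : d = d1 := by
        apply mul2_inj hm
        rw [h2d1, h1, h2]; ring
      exact ⟨hdd, h1.symm, h2.symm⟩
    · right
      have hdd : d = -d1 := by
        apply mul2_inj hm
        rw [mul_neg, h2d1, h1, h2]; ring
      exact ⟨hdd, h2.symm, h1.symm⟩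
  have hAcard : ∀ d0 : ZMod m, Rep m d0 → (d0 = d1 ∧ c0 + d0 = x ∧ c0 - d0 = y) ∨ (d0 = -d1 ∧ c0 + d0 = y ∧ c0 - d0 = x) →
      ((idxA m).filter
      (fun t => ({(some (x,i) : V m), some (y,i)} : Finset (V m)) ⊆ tripA m t.1 t.2.1 t.2.2)).card = 1 := by
    intro d0 hrep hcase
    apply filter_card_one (a := (c0, d0, i))
    · exact mem_idxA.mpr hrep
    · rw [pair_subset_iff, mem_tripA, mem_tripA]
      rcases hcase with ⟨-, h1, h2⟩ | ⟨-, h1, h2⟩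
      · exact ⟨Or.inl ⟨h1.symm, rfl⟩, Or.inr (Or.inl ⟨h2.symm, rfl⟩)⟩
      · exact ⟨Or.inr (Or.inl ⟨h2.symm, rfl⟩), Or.inl ⟨h1.symm, rfl⟩⟩
    · rintro ⟨c, d, j⟩ hb hQ
      have hd : Rep m d := mem_idxA.mp hb
      obtain ⟨hcc, hjj, hdd⟩ := key c d j hd hQ
      have hdeq : d = d0 := by
        rcases hdd with ⟨h1, -⟩ | ⟨h1, -⟩ <;> rcases hcase with ⟨h2, -⟩ | ⟨h2, -⟩
        · rw [h1, h2]
        · exfalso; rw [h1] at hd; rw [h2] at hrep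
          exact rep_not_both hm hd (by simpa using hrep)
        · exfalso; rw [h1] at hd; rw [h2] at hrep
          exact rep_not_both hm hrep (by simpa using hd)
        · rw [h1, h2]
      rw [Prod.mk.injEq, Prod.mk.injEq]
      exact ⟨hcc, hdeq, hjj⟩
  rw [hC, hB]
  rcases rep_total hm hd1ne with hrep | hrep
  · have h1 : c0 + d1 = x := by
      apply mul2_inj hm
      rw [mul_add, h2c0, h2d1]; ring
    have h2 : c0 - d1 = y := by
      apply mul2_inj hm
      rw [mul_sub, h2c0, h2d1]; ring
    rw [hAcard d1 hrep (Or.inl ⟨rfl, h1, h2⟩)]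
  · have h1 : c0 + -d1 = y := by
      apply mul2_inj hm
      rw [mul_add, h2c0, mul_neg, h2d1]; ring
    have h2 : c0 - -d1 = x := by
      apply mul2_inj hm
      rw [mul_sub, h2c0, mul_neg, h2d1]; ring
    rw [hAcard (-d1) hrep (Or.inr ⟨rfl, h1, h2⟩)]

lemma codeg_cross (hm : m % 2 = 1) (x z : ZMod m) (i : ZMod 3) :
    codegPair (HH m) {(some (x,i) : V m), some (z,i+1)} =
      if z = -x then (if x = 0 then 1 else if Rep m x then 1 else 0) else 1 := by
  rw [codeg_split]
  by_cases hzx : z = -x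
  · rw [if_pos hzx]
    have hA : ((idxA m).filter
        (fun t => ({(some (x,i) : V m), some (z,i+1)} : Finset (V m)) ⊆ tripA m t.1 t.2.1 t.2.2)).card = 0 := by
      apply filter_card_zero
      rintro ⟨c, d, j⟩ hb hQ
      have hd : Rep m d := mem_idxA.mp hb
      rw [pair_subset_iff, mem_tripA, mem_tripA] at hQ
      obtain ⟨hx, hz⟩ := hQ
      rcases hx with ⟨hx1, hx2⟩ | ⟨hx1, hx2⟩ | ⟨hx1, hx2⟩ <;>
        rcases hz with ⟨hz1, hz2⟩ | ⟨hz1, hz2⟩ | ⟨hz1, hz2⟩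
      · exact absurd (hz2.trans hx2.symm) (z3_succ_ne i)
      · exact absurd (hz2.trans hx2.symm) (z3_succ_ne i)
      · have hc : c = x := by
          have := hz1.symm.trans hzx
          exact neg_injective this
        have hdd : d = x - c := by rw [hx1]; ring
        rw [hc, sub_self] at hdd
        exact hd.1 hdd
      · exact absurd (hz2.trans hx2.symm) (z3_succ_ne i)
      · exact absurd (hz2.trans hx2.symm) (z3_succ_ne i)
      · have hc : c = x := by
          have := hz1.symm.trans hzx
          exact neg_injective this
        have hdd : d = c - x := by rw [hx1]; ring
        rw [hc, sub_self] at hdd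
        exact hd.1 hdd
      · exact absurd ⟨hx2, hz2⟩ (z3_no_ab i j)
      · exact absurd ⟨hx2, hz2⟩ (z3_no_ab i j)
      · have hij : i = j := add_right_cancel hz2
        exact absurd (hij.symm.trans hx2).symm (z3_succ_ne _)
    rw [hA]
    by_cases hx0 : x = 0
    · rw [if_pos hx0]
      have hC : ((idxC m).filter
          (fun t => ({(some (x,i) : V m), some (z,i+1)} : Finset (V m)) ⊆ tripC m t.1 t.2)).card = 0 := by
        apply filter_card_zero
        rintro ⟨d, j⟩ hb hQ
        have hd : Rep m d := mem_idxC.mp hb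
        rw [pair_subset_iff, mem_tripC, mem_tripC] at hQ
        rcases hQ.1 with ⟨h1, -⟩ | ⟨h1, -⟩
        · have h1' : x = d := h1
          exact hd.1 (h1'.symm.trans hx0)
        · have h1' : x = -d := h1
          apply hd.1
          have : -d = (0:ZMod m) := h1'.symm.trans hx0
          simpa using this
      have hB : (if ({(some (x,i) : V m), some (z,i+1)} : Finset (V m)) ⊆ tripB m then 1 else 0) = 1 := by
        rw [if_pos]
        rw [pair_subset_iff, mem_tripB, mem_tripB]
        exact ⟨hx0, by rw [hzx, hx0, neg_zero]⟩
      rw [hC, hB]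
    · rw [if_neg hx0]
      by_cases hrx : Rep m x
      · rw [if_pos hrx]
        have hC : ((idxC m).filter
            (fun t => ({(some (x,i) : V m), some (z,i+1)} : Finset (V m)) ⊆ tripC m t.1 t.2)).card = 1 := by
          apply filter_card_one (a := (x, i))
          · exact mem_idxC.mpr hrx
          · rw [pair_subset_iff, mem_tripC, mem_tripC]
            exact ⟨Or.inl ⟨rfl, rfl⟩, Or.inr ⟨hzx, rfl⟩⟩
          · rintro ⟨d, j⟩ hb hQ
            have hd : Rep m d := mem_idxC.mp hb
            rw [pair_subset_iff, mem_tripC, mem_tripC] at hQ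
            rcases hQ.1 with ⟨h1, h2⟩ | ⟨h1, h2⟩
            · rw [Prod.mk.injEq]; exact ⟨h1.symm, h2.symm⟩
            · exfalso
              have h1' : x = -d := h1
              have : d = -x := by rw [h1']; ring
              rw [this] at hd
              exact rep_not_both hm hrx hd
        have hB : (if ({(some (x,i) : V m), some (z,i+1)} : Finset (V m)) ⊆ tripB m then 1 else 0) = 0 := by
          rw [if_neg]
          rw [pair_subset_iff, mem_tripB, mem_tripB]
          rintro ⟨h1, -⟩
          exact hx0 h1
        rw [hC, hB]
      · rw [if_neg hrx]
        have hC : ((idxC m).filter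
            (fun t => ({(some (x,i) : V m), some (z,i+1)} : Finset (V m)) ⊆ tripC m t.1 t.2)).card = 0 := by
          apply filter_card_zero
          rintro ⟨d, j⟩ hb hQ
          have hd : Rep m d := mem_idxC.mp hb
          rw [pair_subset_iff, mem_tripC, mem_tripC] at hQ
          obtain ⟨hx, hz⟩ := hQ
          rcases hx with ⟨hx1, hx2⟩ | ⟨hx1, hx2⟩
          · have h1' : x = d := hx1
            exact hrx (h1' ▸ hd)
          · rcases hz with ⟨hz1, hz2⟩ | ⟨hz1, hz2⟩
            · exact absurd ⟨hx2, hz2⟩ (z3_no_ab i _)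
            · have hij : i = j := add_right_cancel hz2
              exact absurd (hij.symm.trans hx2).symm (z3_succ_ne _)
        have hB : (if ({(some (x,i) : V m), some (z,i+1)} : Finset (V m)) ⊆ tripB m then 1 else 0) = 0 := by
          rw [if_neg]
          rw [pair_subset_iff, mem_tripB, mem_tripB]
          rintro ⟨h1, -⟩
          exact hx0 h1
        rw [hC, hB]
  · rw [if_neg hzx]
    have hC : ((idxC m).filter
        (fun t => ({(some (x,i) : V m), some (z,i+1)} : Finset (V m)) ⊆ tripC m t.1 t.2)).card = 0 := by
      apply filter_card_zero
      rintro ⟨d, j⟩ hb hQ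
      rw [pair_subset_iff, mem_tripC, mem_tripC] at hQ
      obtain ⟨hx, hz⟩ := hQ
      rcases hx with ⟨hx1, hx2⟩ | ⟨hx1, hx2⟩ <;> rcases hz with ⟨hz1, hz2⟩ | ⟨hz1, hz2⟩
      · exact absurd (hz2.trans hx2.symm) (z3_succ_ne i)
      · apply hzx
        have hz1' : z = -d := hz1
        have hx1' : x = d := hx1
        rw [hz1', hx1']
      · exact absurd ⟨hx2, hz2⟩ (z3_no_ab i _)
      · have hij : i = j := add_right_cancel hz2
        exact absurd (hij.symm.trans hx2).symm (z3_succ_ne _)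
    have hB : (if ({(some (x,i) : V m), some (z,i+1)} : Finset (V m)) ⊆ tripB m then 1 else 0) = 0 := by
      rw [if_neg]
      rw [pair_subset_iff, mem_tripB, mem_tripB]
      rintro ⟨h1, h2⟩
      exact hzx (by rw [h1, h2, neg_zero])
    have hxz : x + z ≠ 0 := fun h => hzx (eq_neg_of_add_eq_zero_right h)
    have key : ∀ c d : ZMod m, ∀ j : ZMod 3, Rep m d →
        (({(some (x,i) : V m), some (z,i+1)} : Finset (V m)) ⊆ tripA m c d j) →
        c = -z ∧ j = i ∧ (d = x + z ∨ d = -(x + z)) := by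
      intro c d j hd hQ
      rw [pair_subset_iff, mem_tripA, mem_tripA] at hQ
      obtain ⟨hx, hz⟩ := hQ
      rcases hx with ⟨hx1, hx2⟩ | ⟨hx1, hx2⟩ | ⟨hx1, hx2⟩ <;>
        rcases hz with ⟨hz1, hz2⟩ | ⟨hz1, hz2⟩ | ⟨hz1, hz2⟩
      · exact absurd (hz2.trans hx2.symm) (z3_succ_ne i)
      · exact absurd (hz2.trans hx2.symm) (z3_succ_ne i)
      · have hc : c = -z := by rw [hz1]; ring
        refine ⟨hc, hx2.symm, Or.inl ?_⟩
        have : d = x - c := by rw [hx1]; ring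
        rw [this, hc]; ring
      · exact absurd (hz2.trans hx2.symm) (z3_succ_ne i)
      · exact absurd (hz2.trans hx2.symm) (z3_succ_ne i)
      · have hc : c = -z := by rw [hz1]; ring
        refine ⟨hc, hx2.symm, Or.inr ?_⟩
        have : d = c - x := by rw [hx1]; ring
        rw [this, hc]; ring
      · exact absurd ⟨hx2, hz2⟩ (z3_no_ab i j)
      · exact absurd ⟨hx2, hz2⟩ (z3_no_ab i j)
      · have hij : i = j := add_right_cancel hz2
        exact absurd (hij.symm.trans hx2).symm (z3_succ_ne _)
    have hAcard : ((idxA m).filter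
        (fun t => ({(some (x,i) : V m), some (z,i+1)} : Finset (V m)) ⊆ tripA m t.1 t.2.1 t.2.2)).card = 1 := by
      rcases rep_total hm hxz with hrep | hrep
      · apply filter_card_one (a := (-z, x + z, i))
        · exact mem_idxA.mpr hrep
        · rw [pair_subset_iff, mem_tripA, mem_tripA]
          refine ⟨Or.inl ⟨by ring, rfl⟩, Or.inr (Or.inr ⟨by ring, rfl⟩)⟩
        · rintro ⟨c, d, j⟩ hb hQ
          have hd : Rep m d := mem_idxA.mp hb
          obtain ⟨hc, hj, hdd⟩ := key c d j hd hQ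
          rcases hdd with hdd | hdd
          · rw [Prod.mk.injEq, Prod.mk.injEq]; exact ⟨hc, hdd, hj⟩
          · exfalso
            rw [hdd] at hd
            exact rep_not_both hm hrep hd
      · apply filter_card_one (a := (-z, -(x + z), i))
        · exact mem_idxA.mpr hrep
        · rw [pair_subset_iff, mem_tripA, mem_tripA]
          refine ⟨Or.inr (Or.inl ⟨by ring, rfl⟩), Or.inr (Or.inr ⟨by ring, rfl⟩)⟩
        · rintro ⟨c, d, j⟩ hb hQ
          have hd : Rep m d := mem_idxA.mp hb
          obtain ⟨hc, hj, hdd⟩ := key c d j hd hQ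
          rcases hdd with hdd | hdd
          · exfalso
            rw [hdd] at hd
            exact rep_not_both hm hd hrep
          · rw [Prod.mk.injEq, Prod.mk.injEq]; exact ⟨hc, hdd, hj⟩
    rw [hAcard, hC, hB]

/-! ### cardinalities and triple sizes -/

lemma card_tripA (hm : m % 2 = 1) (c d : ZMod m) (hd : d ≠ 0) (i : ZMod 3) :
    (tripA m c d i).card = 3 := by
  apply Finset.card_eq_three.mpr
  refine ⟨_, _, _, ?_, ?_, ?_, rfl⟩
  · intro h
    rw [Option.some.injEq, Prod.mk.injEq] at h
    exact two_mul_ne_zero hm hd (by linear_combination h.1)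
  · intro h
    rw [Option.some.injEq, Prod.mk.injEq] at h
    exact z3_ne_succ i h.2
  · intro h
    rw [Option.some.injEq, Prod.mk.injEq] at h
    exact z3_ne_succ i h.2

lemma card_tripC (d : ZMod m) (i : ZMod 3) : (tripC m d i).card = 3 := by
  apply Finset.card_eq_three.mpr
  refine ⟨_, _, _, ?_, ?_, ?_, rfl⟩
  · intro h; exact Option.some_ne_none _ h.symm
  · intro h; exact Option.some_ne_none _ h.symm
  · intro h
    rw [Option.some.injEq, Prod.mk.injEq] at h
    exact z3_ne_succ i h.2

lemma card_tripB : (tripB m).card = 3 := by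
  apply Finset.card_eq_three.mpr
  refine ⟨_, _, _, ?_, ?_, ?_, rfl⟩
  · intro h
    rw [Option.some.injEq, Prod.mk.injEq] at h
    exact absurd h.2 (by decide)
  · intro h
    rw [Option.some.injEq, Prod.mk.injEq] at h
    exact absurd h.2 (by decide)
  · intro h
    rw [Option.some.injEq, Prod.mk.injEq] at h
    exact absurd h.2 (by decide)

lemma card_of_mem_HH (hm : m % 2 = 1) : ∀ t ∈ HH m, t.card = 3 := by
  intro t ht
  unfold HH at ht
  rw [Multiset.mem_add, Multiset.mem_add] at ht
  rcases ht with (ht | ht) | ht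
  · rw [Multiset.mem_map] at ht
    obtain ⟨⟨c, d, j⟩, hb, rfl⟩ := ht
    have hd : Rep m d := mem_idxA.mp (Finset.mem_val.mp hb)
    exact card_tripA hm c d hd.1 j
  · rw [Multiset.mem_map] at ht
    obtain ⟨⟨d, j⟩, hb, rfl⟩ := ht
    exact card_tripC d j
  · rw [Multiset.mem_singleton] at ht
    rw [ht]
    exact card_tripB

lemma card_RS (hm : m % 2 = 1) : (RS m).card = m / 2 := by
  have : (RS m).card = (Finset.Ico 1 (m/2 + 1)).card := by
    apply Finset.card_nbij' (fun d : ZMod m => d.val) (fun v : ℕ => (v : ZMod m))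
    · intro d hd
      have hrep : Rep m d := by simpa [RS] using hd
      have h0 : d.val ≠ 0 := fun h => hrep.1 (ZMod.val_injective m (by simp [h, ZMod.val_zero]))
      have h2 : 2 * d.val < m := hrep.2
      simp only [Finset.mem_coe, Finset.mem_Ico]
      omega
    · intro v hv
      rw [Finset.mem_coe, Finset.mem_Ico] at hv
      have hvm : v < m := by omega
      have hval : ((v : ZMod m)).val = v := ZMod.val_cast_of_lt hvm
      have : Rep m (v : ZMod m) := by
        constructor
        · intro h
          rw [h, ZMod.val_zero] at hval
          omega
        · rw [hval]; omega
      simpa [RS] using this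
    · intro d hd
      simp [ZMod.natCast_val, ZMod.cast_id]
    · intro v hv
      rw [Finset.mem_coe, Finset.mem_Ico] at hv
      exact ZMod.val_cast_of_lt (by omega)
  rw [this, Nat.card_Ico]
  omega

lemma card_idxA : (idxA m).card = m * ((RS m).card * 3) := by
  rw [idxA, Finset.card_product, Finset.card_product, Finset.card_univ, Finset.card_univ,
    ZMod.card]
  rfl

lemma card_idxC : (idxC m).card = (RS m).card * 3 := by
  rw [idxC, Finset.card_product, Finset.card_univ]
  rfl

lemma card_HH : Multiset.card (HH m) = (idxA m).card + (idxC m).card + 1 := by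
  unfold HH
  rw [Multiset.card_add, Multiset.card_add, Multiset.card_map, Multiset.card_map]
  rfl

/-! ### properties of the matching PP -/

lemma mem_pairP (u : ZMod m) (l : ZMod 3) (d : ZMod m) (i : ZMod 3) :
    some (u, l) ∈ pairP m d i ↔ (u = -d ∧ l = i) ∨ (u = d ∧ l = i+1) := by
  simp [pairP, Prod.ext_iff]

lemma none_not_mem_pairP (d : ZMod m) (i : ZMod 3) : (none : V m) ∉ pairP m d i := by
  simp [pairP]

lemma card_pairP (d : ZMod m) (i : ZMod 3) : (pairP m d i).card = 2 := by
  rw [pairP, Finset.card_insert_of_notMem, Finset.card_singleton]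
  intro h
  rw [Finset.mem_singleton, Option.some.injEq, Prod.mk.injEq] at h
  exact z3_ne_succ i h.2

lemma pairP_inj (hm : m % 2 = 1) {d d' : ZMod m} {i i' : ZMod 3}
    (hd : Rep m d) (hd' : Rep m d') (h : pairP m d i = pairP m d' i') : d = d' ∧ i = i' := by
  have h1 : some (-d, i) ∈ pairP m d' i' := by
    rw [← h, mem_pairP]; exact Or.inl ⟨rfl, rfl⟩
  rw [mem_pairP] at h1
  rcases h1 with ⟨h1, h2⟩ | ⟨h1, h2⟩
  · exact ⟨neg_injective h1, h2⟩
  · exfalso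
    have : d' = -d := h1.symm
    rw [this] at hd'
    exact rep_not_both hm hd hd'

lemma pairP_disjoint (hm : m % 2 = 1) {d d' : ZMod m} {i i' : ZMod 3}
    (hd : Rep m d) (hd' : Rep m d') (hne : pairP m d i ≠ pairP m d' i') :
    Disjoint (pairP m d i) (pairP m d' i') := by
  rw [Finset.disjoint_left]
  intro v hv hv'
  rcases v with _ | ⟨u, l⟩
  · exact none_not_mem_pairP d i hv
  · rw [mem_pairP] at hv hv'
    have : d = d' ∧ i = i' := by
      rcases hv with ⟨h1, h2⟩ | ⟨h1, h2⟩ <;> rcases hv' with ⟨h3, h4⟩ | ⟨h3, h4⟩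
      · exact ⟨neg_injective (h1.symm.trans h3), h2.symm.trans h4⟩
      · exfalso
        have : d' = -d := by rw [← h3, h1]
        rw [this] at hd'
        exact rep_not_both hm hd hd'
      · exfalso
        have : d = -d' := by rw [← h1, h3]
        rw [this] at hd
        exact rep_not_both hm hd' hd
      · exact ⟨h1.symm.trans h3, add_right_cancel (h2.symm.trans h4)⟩
    exact hne (by rw [this.1, this.2])

lemma card_PP (hm : m % 2 = 1) : (PP m).card = (RS m).card * 3 := by
  rw [PP, Finset.card_image_of_injOn, card_idxC]
  rintro ⟨d, i⟩ hb ⟨d', i'⟩ hb' h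
  have hd : Rep m d := mem_idxC.mp hb
  have hd' : Rep m d' := mem_idxC.mp hb'
  obtain ⟨h1, h2⟩ := pairP_inj hm hd hd' h
  rw [Prod.mk.injEq]
  exact ⟨h1, h2⟩

/-! ### leave structure lemmas -/

lemma PP_cover (hm : m % 2 = 1) (u : ZMod m) (l : ZMod 3) (hu : u ≠ 0) :
    ∃ q ∈ PP m, some (u, l) ∈ q := by
  rcases rep_total hm hu with h | h
  · refine ⟨pairP m u (l+2), Finset.mem_image.mpr ⟨(u, l+2), mem_idxC.mpr h, rfl⟩, ?_⟩
    rw [mem_pairP]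
    exact Or.inr ⟨rfl, (z3_add_sub l).symm⟩
  · refine ⟨pairP m (-u) l, Finset.mem_image.mpr ⟨(-u, l), mem_idxC.mpr h, rfl⟩, ?_⟩
    rw [mem_pairP]
    exact Or.inl ⟨(neg_neg u).symm, rfl⟩

lemma PP_avoid (hm : m % 2 = 1) : ∀ p ∈ PP m,
    Disjoint p ({(none : V m), some (0,0), some (0,1), some (0,2)} : Finset (V m)) := by
  intro p hp
  obtain ⟨⟨d, i⟩, hb, rfl⟩ := Finset.mem_image.mp hp
  have hd : Rep m d := mem_idxC.mp hb
  rw [Finset.disjoint_right]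
  intro a ha
  rw [Finset.mem_insert, Finset.mem_insert, Finset.mem_insert, Finset.mem_singleton] at ha
  rcases ha with rfl | rfl | rfl | rfl
  · exact none_not_mem_pairP d i
  all_goals {
    intro hmem
    rw [mem_pairP] at hmem
    rcases hmem with ⟨h1, -⟩ | ⟨h1, -⟩
    · exact hd.1 (by rw [← neg_eq_zero, ← h1])
    · exact hd.1 h1.symm }

lemma codeg_leave (hm : m % 2 = 1) : ∀ q ∈ PP m ∪
    {({(none : V m), some (0,0)} : Finset (V m)), {none, some (0,1)}, {none, some (0,2)}},
    codegPair (HH m) q = 0 := by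
  intro q hq
  rw [Finset.mem_union] at hq
  rcases hq with hq | hq
  · obtain ⟨⟨d, i⟩, hb, rfl⟩ := Finset.mem_image.mp hq
    have hd : Rep m d := mem_idxC.mp hb
    have := codeg_cross hm (-d) d i
    rw [if_pos (neg_neg d).symm, if_neg (neg_ne_zero.mpr hd.1),
      if_neg (fun h => rep_not_both hm hd h)] at this
    simpa [pairP] using this
  · rw [Finset.mem_insert, Finset.mem_insert, Finset.mem_singleton] at hq
    rcases hq with rfl | rfl | rfl <;>
      simpa using codeg_inf hm (0 : ZMod m) _

lemma cross_one (hm : m % 2 = 1) (u v : ZMod m) (l : ZMod 3)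
    (hP : ({(some (u,l) : V m), some (v,l+1)} : Finset (V m)) ∉ PP m) :
    codegPair (HH m) {(some (u,l) : V m), some (v,l+1)} = 1 := by
  rw [codeg_cross hm u v l]
  by_cases hv : v = -u
  · rw [if_pos hv]
    by_cases hu : u = 0
    · rw [if_pos hu]
    · rw [if_neg hu]
      by_cases hru : Rep m u
      · rw [if_pos hru]
      · exfalso
        apply hP
        rw [PP, Finset.mem_image]
        have hrep : Rep m (-u) := (rep_total hm hu).resolve_left hru
        refine ⟨(-u, l), mem_idxC.mpr hrep, ?_⟩
        rw [pairP, neg_neg, hv]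
  · rw [if_neg hv]

lemma codeg_elsewhere (hm : m % 2 = 1) : ∀ a b : V m, a ≠ b →
    ({a, b} : Finset (V m)) ∉ PP m ∪
      {({(none : V m), some (0,0)} : Finset (V m)), {none, some (0,1)}, {none, some (0,2)}} →
    codegPair (HH m) {a, b} = 1 := by
  have hstar : ∀ l : ZMod 3, ({(none : V m), some ((0:ZMod m), l)} : Finset (V m)) ∈ PP m ∪
      {({(none : V m), some (0,0)} : Finset (V m)), {none, some (0,1)}, {none, some (0,2)}} := by
    intro l
    apply Finset.mem_union_right
    rcases z3cases l with rfl | rfl | rfl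
    · exact Finset.mem_insert_self _ _
    · exact Finset.mem_insert_of_mem (Finset.mem_insert_self _ _)
    · exact Finset.mem_insert_of_mem (Finset.mem_insert_of_mem (Finset.mem_singleton_self _))
  intro a b hab hL
  rcases a with _ | ⟨u, l⟩ <;> rcases b with _ | ⟨v, l'⟩
  · exact absurd rfl hab
  · by_cases hv : v = 0
    · exfalso; subst hv; exact hL (hstar l')
    · rw [codeg_inf hm v l', if_neg hv]
  · rw [Finset.pair_comm (some (u,l) : V m) none]
    by_cases hv : u = 0
    · exfalso
      apply hL
      rw [hv, Finset.pair_comm (some (0,l) : V m) none]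
      exact hstar l
    · rw [codeg_inf hm u l, if_neg hv]
  · rcases z3_tri l l' with h | h | h
    · rw [h]
      exact codeg_same hm u v l (fun he => hab (by rw [he, ← h]))
    · rw [h]
      apply cross_one hm u v l
      intro hp
      rw [← h] at hp
      exact hL (Finset.mem_union_left _ hp)
    · rw [Finset.pair_comm (some (u,l) : V m) (some (v,l')), h]
      apply cross_one hm v u l'
      intro hp
      apply hL
      rw [Finset.pair_comm (some (u,l) : V m) (some (v,l')), h]
      exact Finset.mem_union_left _ hp

lemma codeg_le_one (hm : m % 2 = 1) : ∀ a b : V m, a ≠ b →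
    codegPair (HH m) {a, b} ≤ 1 := by
  intro a b hab
  rcases a with _ | ⟨u, l⟩ <;> rcases b with _ | ⟨v, l'⟩
  · exact absurd rfl hab
  · rw [codeg_inf hm v l']; split_ifs <;> norm_num
  · rw [Finset.pair_comm, codeg_inf hm u l]; split_ifs <;> norm_num
  · rcases z3_tri l l' with h | h | h
    · rw [h, codeg_same hm u v l (fun he => hab (by rw [he, ← h]))]
    · rw [h, codeg_cross hm u v l]
      split_ifs <;> norm_num
    · rw [Finset.pair_comm (some (u,l) : V m) (some (v,l')), h, codeg_cross hm v u l']
      split_ifs <;> norm_num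

end
end S8

lemma codeg_map {α β : Type*} [DecidableEq α] [DecidableEq β] (f : α ↪ β)
    (H : Multiset (Finset α)) (p : Finset α) :
    codegPair (H.map (Finset.map f)) (p.map f) = codegPair H p := by
  unfold codegPair
  rw [Multiset.filter_map, Multiset.card_map]
  congr 1
  apply Multiset.filter_congr
  intro t _
  simp only [Function.comp]
  exact Finset.map_subset_map



/-- for `ν ≡ 4 (mod 6)` there is a `PTS(ν, 1)` with exactly
`(C(ν,2) − ν/2 − 1)/3` triples whose leave is `K_{1,3}` plus `(ν−4)/2` independent
edges. -/
theorem stmt_8 (ν : ℕ) (hpos : 0 < ν) (hmod : ν % 6 = 4) :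
    ∃ H : Multiset (Finset (Fin ν)),
      (∀ t ∈ H, t.card = 3) ∧
      (∀ x y : Fin ν, x ≠ y → codegPair H {x, y} ≤ 1) ∧
      Multiset.card H = (ν.choose 2 - ν / 2 - 1) / 3 ∧
      ∃ w x y z : Fin ν,
        w ≠ x ∧ w ≠ y ∧ w ≠ z ∧ x ≠ y ∧ x ≠ z ∧ y ≠ z ∧
        ∃ P : Finset (Finset (Fin ν)),
          P.card = (ν - 4) / 2 ∧
          (∀ p ∈ P, p.card = 2) ∧
          (∀ p ∈ P, ∀ q ∈ P, p ≠ q → Disjoint p q) ∧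
          (∀ p ∈ P, Disjoint p ({w, x, y, z} : Finset (Fin ν))) ∧
          (∀ v : Fin ν, v ∉ ({w, x, y, z} : Finset (Fin ν)) → ∃ p ∈ P, v ∈ p) ∧
          (∀ p ∈ P ∪ {({w, x} : Finset (Fin ν)), {w, y}, {w, z}},
            codegPair H p = 0) ∧
          (∀ a b : Fin ν, a ≠ b →
            ({a, b} : Finset (Fin ν)) ∉ P ∪ {({w, x} : Finset (Fin ν)), {w, y}, {w, z}} →
            codegPair H {a, b} = 1) := by

  obtain ⟨t, rfl⟩ : ∃ t, ν = 6 * t + 4 := ⟨ν / 6, by omega⟩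
  set m : ℕ := 2 * t + 1 with hmdef
  haveI : NeZero m := ⟨by omega⟩
  have hm : m % 2 = 1 := by omega
  have hcard : Fintype.card (S8.V m) = 6 * t + 4 := by
    rw [Fintype.card_option, Fintype.card_prod, ZMod.card, ZMod.card]
    omega
  let e : S8.V m ≃ Fin (6 * t + 4) := Fintype.equivFinOfCardEq hcard
  let f : S8.V m ↪ Fin (6 * t + 4) := e.toEmbedding
  have hfe : ∀ a : Fin (6 * t + 4), f (e.symm a) = a := fun a => e.apply_symm_apply a
  have pairmap : ∀ a b : Fin (6 * t + 4),
      ({a, b} : Finset (Fin (6 * t + 4))) = ({e.symm a, e.symm b} : Finset (S8.V m)).map f := by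
    intro a b
    rw [Finset.map_insert, Finset.map_singleton, hfe, hfe]
  have hsymm_ne : ∀ a b : Fin (6 * t + 4), a ≠ b → e.symm a ≠ e.symm b := by
    intro a b hab h
    exact hab (by rw [← hfe a, ← hfe b, h])
  refine ⟨(S8.HH m).map (Finset.map f), ?_, ?_, ?_,
    f none, f (some (0, 0)), f (some (0, 1)), f (some (0, 2)),
    ?_, ?_, ?_, ?_, ?_, ?_,
    (S8.PP m).image (Finset.map f), ?_, ?_, ?_, ?_, ?_, ?_, ?_⟩
  · -- all triples have card 3
    intro t' ht'
    rw [Multiset.mem_map] at ht'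
    obtain ⟨s, hs, rfl⟩ := ht'
    rw [Finset.card_map]
    exact S8.card_of_mem_HH hm s hs
  · -- codegree ≤ 1
    intro a b hab
    rw [pairmap a b, codeg_map]
    exact S8.codeg_le_one hm _ _ (hsymm_ne a b hab)
  · -- cardinality
    rw [Multiset.card_map, S8.card_HH, S8.card_idxA, S8.card_idxC, S8.card_RS hm,
      Nat.choose_two_right]
    have h1 : m / 2 = t := by omega
    rw [h1]
    have h2 : (6 * t + 4) * ((6 * t + 4) - 1) = 36 * (t * t) + 42 * t + 12 := by
      have h3 : (6 * t + 4) - 1 = 6 * t + 3 := by omega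
      rw [h3]; ring
    have h4 : m * (t * 3) = 6 * (t * t) + 3 * t := by rw [hmdef]; ring
    rw [h4, h2]
    omega
  · -- w ≠ x
    intro h
    exact Option.some_ne_none _ (f.injective h).symm
  · intro h
    exact Option.some_ne_none _ (f.injective h).symm
  · intro h
    exact Option.some_ne_none _ (f.injective h).symm
  · -- x ≠ y
    intro h
    have := f.injective h
    rw [Option.some.injEq, Prod.mk.injEq] at this
    exact absurd this.2 (by decide)
  · intro h
    have := f.injective h
    rw [Option.some.injEq, Prod.mk.injEq] at this
    exact absurd this.2 (by decide)
  · intro h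
    have := f.injective h
    rw [Option.some.injEq, Prod.mk.injEq] at this
    exact absurd this.2 (by decide)
  · -- card P
    rw [Finset.card_image_of_injective _ (Finset.map_injective f), S8.card_PP hm,
      S8.card_RS hm]
    omega
  · -- each p has card 2
    intro p hp
    obtain ⟨q, hq, rfl⟩ := Finset.mem_image.mp hp
    rw [Finset.card_map]
    obtain ⟨⟨d, i⟩, hb, rfl⟩ := Finset.mem_image.mp hq
    exact S8.card_pairP d i
  · -- pairwise disjoint
    intro p hp q hq hpq
    obtain ⟨p', hp', rfl⟩ := Finset.mem_image.mp hp
    obtain ⟨q', hq', rfl⟩ := Finset.mem_image.mp hq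
    rw [Finset.disjoint_map]
    obtain ⟨⟨d, i⟩, hb, rfl⟩ := Finset.mem_image.mp hp'
    obtain ⟨⟨d', i'⟩, hb', rfl⟩ := Finset.mem_image.mp hq'
    exact S8.pairP_disjoint hm (S8.mem_idxC.mp hb) (S8.mem_idxC.mp hb')
      (fun h => hpq (by rw [h]))
  · -- disjoint from {w,x,y,z}
    intro p hp
    obtain ⟨q, hq, rfl⟩ := Finset.mem_image.mp hp
    have : ({f none, f (some (0,0)), f (some (0,1)), f (some (0,2))} :
        Finset (Fin (6 * t + 4))) =
        ({(none : S8.V m), some (0,0), some (0,1), some (0,2)} : Finset (S8.V m)).map f := by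
      rw [Finset.map_insert, Finset.map_insert, Finset.map_insert, Finset.map_singleton]
    rw [this, Finset.disjoint_map]
    exact S8.PP_avoid hm q hq
  · -- covering
    intro v hv
    rcases hu : e.symm v with _ | ⟨p, l⟩
    · exfalso
      apply hv
      have : v = f none := by rw [← hfe v, hu]
      rw [this]
      exact Finset.mem_insert_self _ _
    · by_cases hp0 : p = 0
      · exfalso
        apply hv
        have : v = f (some (0, l)) := by rw [← hfe v, hu, hp0]
        rw [this]
        rcases S8.z3cases l with rfl | rfl | rfl
        · exact Finset.mem_insert_of_mem (Finset.mem_insert_self _ _)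
        · exact Finset.mem_insert_of_mem (Finset.mem_insert_of_mem (Finset.mem_insert_self _ _))
        · exact Finset.mem_insert_of_mem (Finset.mem_insert_of_mem
            (Finset.mem_insert_of_mem (Finset.mem_singleton_self _)))
      · obtain ⟨q, hq, hmem⟩ := S8.PP_cover hm p l hp0
        refine ⟨q.map f, Finset.mem_image_of_mem _ hq, ?_⟩
        have : v = f (some (p, l)) := by rw [← hfe v, hu]
        rw [this]
        exact Finset.mem_map_of_mem f hmem
  · -- codegree zero on the leave
    intro p hp
    rw [Finset.mem_union] at hp
    rcases hp with hp | hp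
    · obtain ⟨q, hq, rfl⟩ := Finset.mem_image.mp hp
      rw [codeg_map]
      exact S8.codeg_leave hm q (Finset.mem_union_left _ hq)
    · rw [Finset.mem_insert, Finset.mem_insert, Finset.mem_singleton] at hp
      have hwx : ∀ l : ZMod 3, ({f none, f (some ((0:ZMod m), l))} : Finset (Fin (6*t+4))) =
          ({(none : S8.V m), some (0, l)} : Finset (S8.V m)).map f := by
        intro l
        rw [Finset.map_insert, Finset.map_singleton]
      rcases hp with rfl | rfl | rfl
      · rw [hwx 0, codeg_map]
        refine S8.codeg_leave hm _ (Finset.mem_union_right _ (Finset.mem_insert_self _ _))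
      · rw [hwx 1, codeg_map]
        refine S8.codeg_leave hm _ (Finset.mem_union_right _
          (Finset.mem_insert_of_mem (Finset.mem_insert_self _ _)))
      · rw [hwx 2, codeg_map]
        refine S8.codeg_leave hm _ (Finset.mem_union_right _
          (Finset.mem_insert_of_mem (Finset.mem_insert_of_mem (Finset.mem_singleton_self _))))
  · -- codegree one elsewhere
    intro a b hab hL
    rw [pairmap a b, codeg_map]
    apply S8.codeg_elsewhere hm _ _ (hsymm_ne a b hab)
    intro hmem
    apply hL
    rw [Finset.mem_union] at hmem
    rcases hmem with hmem | hmem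
    · apply Finset.mem_union_left
      rw [pairmap a b]
      exact Finset.mem_image_of_mem _ hmem
    · apply Finset.mem_union_right
      rw [Finset.mem_insert, Finset.mem_insert, Finset.mem_singleton] at hmem
      have hwx : ∀ l : ZMod 3, ({(none : S8.V m), some ((0:ZMod m), l)} : Finset (S8.V m)).map f =
          ({f none, f (some ((0:ZMod m), l))} : Finset (Fin (6*t+4))) := by
        intro l
        rw [Finset.map_insert, Finset.map_singleton]
      rcases hmem with hq | hq | hq
      · rw [pairmap a b, hq, hwx 0]
        exact Finset.mem_insert_self _ _
      · rw [pairmap a b, hq, hwx 1]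
        exact Finset.mem_insert_of_mem (Finset.mem_insert_self _ _)
      · rw [pairmap a b, hq, hwx 2]
        exact Finset.mem_insert_of_mem (Finset.mem_insert_of_mem (Finset.mem_singleton_self _))
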